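/- arXiv:1401.2761 — 6 statements merged into one kernel-verified Lean document; each statement's English description precedes it below -/
import Mathlib

section
/- Let R be a commutative ring, T = T(R), H = R^• the monoid of regular elements of R, Q = q(H) = T^• the group of regular elements of T, and M ⊆ T an R-submodule. For any subset Y ⊆ T, the set of regular elements of (M : ⟨Y^•⟩_R) equals (M^• : Y^•) computed in Q, where ⟨Y^•⟩_R is the R-submodule generated by the regular elements of Y; moreover (M : ⟨Y^•⟩_R) = (M : Y^•). -/
open scoped Pointwise

/-- For subsets `Z, X` of the total quotient ring `T`, the colon set
`(Z : X) = {a ∈ T | a X ⊆ Z}`. -/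
def colonSet (T : Type*) [CommRing T] (Z X : Set T) : Set T :=
  {a : T | ∀ x ∈ X, a * x ∈ Z}

/-- The image of `R` inside its total quotient ring `T`. -/
def ringSet (R T : Type*) [CommRing R] [CommRing T] [Algebra R T] : Set T :=
  Set.range (algebraMap R T)

/-- `X⁻¹ = (R : X)` for a subset `X ⊆ T`. -/
def invSet (R T : Type*) [CommRing R] [CommRing T] [Algebra R T] (X : Set T) : Set T :=
  colonSet T (ringSet R T) X

/-- The divisorial (v-) closure `X_v = (X⁻¹)⁻¹` of a subset `X ⊆ T`. -/
def vSet (R T : Type*) [CommRing R] [CommRing T] [Algebra R T] (X : Set T) : Set T :=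
  invSet R T (invSet R T X)

/-- The set of regular elements (non-zero-divisors) of `T`. -/
def regSet (T : Type*) [CommRing T] : Set T :=
  {t : T | t ∈ nonZeroDivisors T}

/-- The colon set computed inside `Q = T^• ` : `(Z :_Q X) = {a ∈ Q | a X ⊆ Z}`. -/
def colonQ (T : Type*) [CommRing T] (Z X : Set T) : Set T :=
  {a : T | a ∈ nonZeroDivisors T ∧ ∀ x ∈ X, a * x ∈ Z}

/-- The monoid `H = R^•` of regular elements of `R`, viewed inside `T`. -/
def HSet (R T : Type*) [CommRing R] [CommRing T] [Algebra R T] : Set T :=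
  ringSet R T ∩ regSet T

/-- The v-closure of a subset of `Q = T^•` with respect to the monoid `H = R^•`. -/
def vMon (R T : Type*) [CommRing R] [CommRing T] [Algebra R T] (X : Set T) : Set T :=
  colonQ T (HSet R T) (colonQ T (HSet R T) X)

/-- `X ⊆ T` is `R`-fractional: `cX ⊆ R` for some regular `c ∈ R^•`. -/
def isFrac (R T : Type*) [CommRing R] [CommRing T] [Algebra R T] (X : Set T) : Prop :=
  ∃ c : R, c ∈ nonZeroDivisors R ∧ ∀ x ∈ X, algebraMap R T c * x ∈ ringSet R T

/-- The complete integral closure `R̂` of `R` in `T`. -/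
def hatSet (R T : Type*) [CommRing R] [CommRing T] [Algebra R T] : Set T :=
  {x : T | ∃ c : R, c ∈ nonZeroDivisors R ∧
    ∀ n : ℕ, 1 ≤ n → algebraMap R T c * x ^ n ∈ ringSet R T}

/-- The complete integral closure `Ĥ` of the monoid `H = R^•` in `q(H) = T^•`. -/
def monHat (R T : Type*) [CommRing R] [CommRing T] [Algebra R T] : Set T :=
  {x : T | x ∈ nonZeroDivisors T ∧
    ∃ c ∈ HSet R T, ∀ n : ℕ, 1 ≤ n → c * x ^ n ∈ HSet R T}

/-- `R` is a v-Marot ring: every regular fractional divisorial ideal is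
v-generated by its regular elements. -/
def isVMarot (R T : Type*) [CommRing R] [CommRing T] [Algebra R T] : Prop :=
  ∀ I : Set T, (I ∩ regSet T).Nonempty → isFrac R T I → vSet R T I = I →
    I = vSet R T (I ∩ regSet T)

theorem stmt6 (R T : Type*) [CommRing R] [CommRing T] [Algebra R T] [IsFractionRing R T]
    (M : Submodule R T) (Y : Set T) :
    colonSet T (M : Set T) (Submodule.span R (Y ∩ regSet T) : Set T) ∩ regSet T =
        colonQ T ((M : Set T) ∩ regSet T) (Y ∩ regSet T) ∧
      colonSet T (M : Set T) (Submodule.span R (Y ∩ regSet T) : Set T) =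
        colonSet T (M : Set T) (Y ∩ regSet T) := by
  have key : colonSet T (M : Set T) (Submodule.span R (Y ∩ regSet T) : Set T) =
      colonSet T (M : Set T) (Y ∩ regSet T) := by
    ext a
    constructor
    · intro ha x hx
      exact ha x (Submodule.subset_span hx)
    · intro ha x hx
      induction hx using Submodule.span_induction with
      | mem y hy => exact ha y hy
      | zero => simp only [mul_zero]; exact M.zero_mem
      | add y z _ _ hy hz => rw [mul_add]; exact M.add_mem hy hz
      | smul r y _ hy =>
          rw [Algebra.smul_def, ← mul_assoc, mul_comm a, mul_assoc, ← Algebra.smul_def]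
          exact M.smul_mem r hy
  refine ⟨?_, key⟩
  rw [key]
  ext a
  constructor
  · rintro ⟨ha, hreg⟩
    refine ⟨hreg, fun x hx => ⟨ha x hx, show a * x ∈ nonZeroDivisors T from mul_mem hreg hx.2⟩⟩
  · rintro ⟨hreg, ha⟩
    exact ⟨fun x hx => (ha x hx).1, hreg⟩
end

section
/- Let R be a commutative ring with total quotient ring T and let E ⊆ R̂ be a finite subset of the complete integral closure of R in T. Then E_v ⊆ R̂, where E_v is the divisorial closure of E with respect to R. -/
open scoped Pointwise

theorem stmt7 (R T : Type*) [CommRing R] [CommRing T] [Algebra R T] [IsFractionRing R T]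
    (E : Set T) (hEfin : E.Finite) (hE : E ⊆ hatSet R T) :
    vSet R T E ⊆ hatSet R T := by
  classical
  intro x hx
  choose f hf1 hf2 using fun (e : T) (he : e ∈ E) => hE he
  set g : T → R := fun e => if he : e ∈ E then f e he else 1 with hg
  have hgnzd : ∀ e : T, g e ∈ nonZeroDivisors R := by
    intro e
    by_cases he : e ∈ E
    · simp only [hg, dif_pos he]; exact hf1 e he
    · simp only [hg, dif_neg he]; exact one_mem _
  set S : Finset T := hEfin.toFinset with hS
  set c : R := ∏ e ∈ S, g e with hc
  have hcnzd : c ∈ nonZeroDivisors R := Submonoid.prod_mem _ (fun e _ => hgnzd e)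
  -- each factor lemma: algebraMap (g e) * e ^ n ∈ ringSet R T for e ∈ E
  have hfac : ∀ e ∈ E, ∀ n : ℕ, algebraMap R T (g e) * e ^ n ∈ ringSet R T := by
    intro e he n
    rcases Nat.eq_zero_or_pos n with h0 | h1
    · subst h0; simp only [pow_zero, mul_one]; exact ⟨g e, rfl⟩
    · simp only [hg, dif_pos he]; exact hf2 e he n h1
  have hRsub : ∀ (F : Finset T) (u : T → T),
      (∀ e ∈ F, u e ∈ ringSet R T) → (∏ e ∈ F, u e) ∈ ringSet R T := by
    intro F u hu
    have : ∀ e ∈ F, u e ∈ (algebraMap R T).range := fun e he => hu e he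
    exact Subring.prod_mem _ this
  -- key: c times any monomial in E lies in R
  have key : ∀ L : List T, (∀ t ∈ L, t ∈ E) → algebraMap R T c * L.prod ∈ ringSet R T := by
    intro L hL
    have hLsub : L.toFinset ⊆ S := by
      intro t ht
      rw [hS, Set.Finite.mem_toFinset]
      exact hL t (List.mem_toFinset.mp ht)
    have hprod : L.prod = ∏ e ∈ S, e ^ L.count e :=
      Finset.prod_list_count_of_subset L S hLsub
    have hcmap : algebraMap R T c = ∏ e ∈ S, algebraMap R T (g e) := by
      rw [hc, map_prod]
    rw [hprod, hcmap, ← Finset.prod_mul_distrib]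
    refine hRsub S _ (fun e he => ?_)
    exact hfac e (by rw [hS, Set.Finite.mem_toFinset] at he; exact he) _
  -- main induction
  have main : ∀ n : ℕ, ∀ L : List T, (∀ t ∈ L, t ∈ E) →
      algebraMap R T c * x ^ n * L.prod ∈ ringSet R T := by
    intro n
    induction n with
    | zero => intro L hL; simpa using key L hL
    | succ k ih =>
      intro L hL
      have hb : algebraMap R T c * x ^ k * L.prod ∈ invSet R T E := by
        intro e he
        have := ih (e :: L) (by
          intro t ht
          rcases List.mem_cons.mp ht with h | h
          · subst h; exact he
          · exact hL t h)
        rw [List.prod_cons] at this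
        have heq : algebraMap R T c * x ^ k * L.prod * e
            = algebraMap R T c * x ^ k * (e * L.prod) := by ring
        rw [heq]; exact this
      have hxb := hx _ hb
      have heq : algebraMap R T c * x ^ (k + 1) * L.prod
          = x * (algebraMap R T c * x ^ k * L.prod) := by ring
      rw [heq]; exact hxb
  refine ⟨c, hcnzd, fun n _ => ?_⟩
  simpa using main n [] (by simp)
end

section
/- Let R be a commutative ring with total quotient ring T, R̂ its complete integral closure in T, and 𝔣 = (R : R̂) the conductor. Then (R̂)_v = (𝔣 : 𝔣). -/
open scoped Pointwise

lemma hat_mul {R T : Type*} [CommRing R] [CommRing T] [Algebra R T]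
    {x y : T} (hx : x ∈ hatSet R T) (hy : y ∈ hatSet R T) : x * y ∈ hatSet R T := by
  obtain ⟨c, hc, hcx⟩ := hx
  obtain ⟨d, hd, hdy⟩ := hy
  refine ⟨c * d, mul_mem hc hd, fun n hn => ?_⟩
  obtain ⟨r, hr⟩ := hcx n hn
  obtain ⟨s, hs⟩ := hdy n hn
  refine ⟨r * s, ?_⟩
  rw [map_mul, map_mul, hr, hs]
  ring

lemma one_mem_hat {R T : Type*} [CommRing R] [CommRing T] [Algebra R T] :
    (1 : T) ∈ hatSet R T := by
  refine ⟨1, one_mem _, fun n _ => ⟨1, ?_⟩⟩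
  simp

theorem stmt8 (R T : Type*) [CommRing R] [CommRing T] [Algebra R T] [IsFractionRing R T] :
    vSet R T (hatSet R T) =
      colonSet T (colonSet T (ringSet R T) (hatSet R T))
        (colonSet T (ringSet R T) (hatSet R T)) := by
  ext a
  constructor
  · intro ha f hf
    intro x hx
    have hfx : f * x ∈ colonSet T (ringSet R T) (hatSet R T) := by
      intro y hy
      have := hf (x * y) (hat_mul hx hy)
      rwa [show f * x * y = f * (x * y) by ring]
    have := ha (f * x) hfx
    rwa [show a * f * x = a * (f * x) by ring]
  · intro ha f hf
    have := ha f hf 1 one_mem_hat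
    rwa [mul_one] at this
end

section
/- Let R be a commutative ring, T = T(R), H = R^• its monoid of regular elements, Q = q(H). For every subset 𝔞 ⊆ Q, the set of regular elements of (R :_T 𝔞) equals (H :_Q 𝔞), and (𝔞_{v_R})^• ⊆ 𝔞_{v_H}. -/
open scoped Pointwise

theorem stmt9 (R T : Type*) [CommRing R] [CommRing T] [Algebra R T] [IsFractionRing R T]
    (𝔞 : Set T) (h𝔞 : 𝔞 ⊆ regSet T) :
    colonSet T (ringSet R T) 𝔞 ∩ regSet T = colonQ T (HSet R T) 𝔞 ∧
      vSet R T 𝔞 ∩ regSet T ⊆ vMon R T 𝔞 := by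
  have key : colonSet T (ringSet R T) 𝔞 ∩ regSet T = colonQ T (HSet R T) 𝔞 := by
    ext a
    constructor
    · rintro ⟨ha, hreg⟩
      refine ⟨hreg, fun x hx => ⟨ha x hx, (mul_mem hreg (h𝔞 hx) : _ ∈ nonZeroDivisors T)⟩⟩
    · rintro ⟨hreg, h⟩
      exact ⟨fun x hx => (h x hx).1, hreg⟩
  refine ⟨key, ?_⟩
  rintro a ⟨ha, hreg⟩
  refine ⟨hreg, fun b hb => ?_⟩
  rw [← key] at hb
  exact ⟨ha b hb.1, (mul_mem hreg hb.2 : _ ∈ nonZeroDivisors T)⟩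
end

section
/- For a commutative ring R the following are equivalent: (a) every regular divisorial ideal I of R satisfies I = (I^•)_v, i.e., is v-generated by its regular elements; (b) every regular fractional divisorial ideal I of R satisfies I = (I^•)_v; (c) every regular fractional divisorial ideal I of R equals the intersection of all fractional principal ideals zR with z ∈ T(R)^• and zR ⊇ I. -/
open scoped Pointwise

section aux
variable {R T : Type*} [CommRing R] [CommRing T] [Algebra R T] [IsFractionRing R T]

lemma mem_invSet {X : Set T} {a : T} :
    a ∈ invSet R T X ↔ ∀ x ∈ X, a * x ∈ ringSet R T := Iff.rfl

lemma invSet_antitone {X Y : Set T} (h : X ⊆ Y) : invSet R T Y ⊆ invSet R T X :=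
  fun _ ha x hx => ha x (h hx)

lemma subset_vSet (X : Set T) : X ⊆ vSet R T X :=
  fun x hx a ha => by rw [mul_comm]; exact ha x hx

lemma invSet_vSet (X : Set T) : invSet R T (vSet R T X) = invSet R T X :=
  le_antisymm (invSet_antitone (subset_vSet X)) (subset_vSet (invSet R T X))

lemma map_mem_reg {c : R} (hc : c ∈ nonZeroDivisors R) :
    algebraMap R T c ∈ regSet T :=
  (IsLocalization.map_units T ⟨c, hc⟩).mem_nonZeroDivisors

/-- a regular element of T is (map r) / (map s) with r,s regular in R -/
lemma reg_factor {t : T} (ht : t ∈ nonZeroDivisors T) :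
    ∃ r s : R, r ∈ nonZeroDivisors R ∧ s ∈ nonZeroDivisors R ∧
      t * algebraMap R T s = algebraMap R T r := by
  obtain ⟨⟨r, s⟩, e⟩ := IsLocalization.surj (nonZeroDivisors R) t
  refine ⟨r, s, ?_, s.2, e⟩
  rw [mem_nonZeroDivisors_iff_right]
  intro a ha
  have h0 : algebraMap R T a * (t * algebraMap R T (s : R)) = 0 := by
    rw [e, ← map_mul, ha, map_zero]
  have hs : IsUnit (algebraMap R T (s : R)) := IsLocalization.map_units T s
  have : algebraMap R T a = 0 := mem_nonZeroDivisors_iff_right.1 (mul_mem ht hs.mem_nonZeroDivisors) _ h0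
  exact IsFractionRing.injective R T (by rw [this, map_zero])

include R in
lemma isUnit_of_reg {t : T} (ht : t ∈ nonZeroDivisors T) : IsUnit t := by
  obtain ⟨r, s, hr, _, e⟩ := reg_factor (R := R) ht
  exact isUnit_of_mul_isUnit_left
    (by rw [e]; exact IsLocalization.map_units T ⟨r, hr⟩)

lemma isFrac_invSet {X : Set T} (h : (X ∩ regSet T).Nonempty) :
    isFrac R T (invSet R T X) := by
  obtain ⟨x, hxX, hxr⟩ := h
  obtain ⟨r, s, hr, hs, e⟩ := reg_factor (R := R) hxr
  refine ⟨r, hr, fun a ha => ?_⟩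
  obtain ⟨b, hb⟩ := ha x hxX
  exact ⟨s * b, by rw [map_mul, hb, ← e]; ring⟩

lemma regMem_invSet {X : Set T} (h : isFrac R T X) :
    ((invSet R T X) ∩ regSet T).Nonempty := by
  obtain ⟨c, hc, hcx⟩ := h
  exact ⟨algebraMap R T c, hcx, map_mem_reg hc⟩
end aux

section smul
variable {R T : Type*} [CommRing R] [CommRing T] [Algebra R T] [IsFractionRing R T]

lemma mem_smul_set' {z t : T} {S : Set T} : t ∈ z • S ↔ ∃ y ∈ S, z * y = t := by
  simp [Set.mem_smul_set, smul_eq_mul]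

lemma invSet_smul (v : Tˣ) (X : Set T) :
    invSet R T ((v : T) • X) = ((v⁻¹ : Tˣ) : T) • invSet R T X := by
  ext a
  rw [mem_smul_set']
  constructor
  · intro ha
    refine ⟨(v : T) * a, fun x hx => ?_, by rw [← mul_assoc, Units.inv_mul, one_mul]⟩
    · have := ha ((v : T) * x) (mem_smul_set'.2 ⟨x, hx, rfl⟩)
      rwa [show a * ((v : T) * x) = (v : T) * a * x by ring] at this
  · rintro ⟨b, hb, rfl⟩ x hx
    rw [mem_smul_set'] at hx
    obtain ⟨y, hy, rfl⟩ := hx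
    have := hb y hy
    rwa [show ((v⁻¹ : Tˣ) : T) * b * ((v : T) * y) = (((v⁻¹ : Tˣ) : T) * (v : T)) * (b * y) by ring,
      Units.inv_mul, one_mul]

lemma vSet_smul (v : Tˣ) (X : Set T) :
    vSet R T ((v : T) • X) = (v : T) • vSet R T X := by
  unfold vSet
  rw [invSet_smul, invSet_smul, inv_inv]

lemma smul_inter_reg (v : Tˣ) (X : Set T) :
    ((v : T) • X) ∩ regSet T = (v : T) • (X ∩ regSet T) := by
  ext t
  simp only [Set.mem_inter_iff, mem_smul_set']
  constructor
  · rintro ⟨⟨y, hy, rfl⟩, hreg⟩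
    refine ⟨y, ⟨hy, ?_⟩, rfl⟩
    have : ((v⁻¹ : Tˣ) : T) * ((v : T) * y) = y := by
      rw [← mul_assoc, Units.inv_mul, one_mul]
    rw [← this]
    exact mul_mem ((v⁻¹ : Tˣ).isUnit.mem_nonZeroDivisors) hreg
  · rintro ⟨y, ⟨hy, hreg⟩, rfl⟩
    exact ⟨⟨y, hy, rfl⟩, mul_mem (v.isUnit.mem_nonZeroDivisors) hreg⟩

lemma smul_cancel {v : Tˣ} {X Y : Set T} (h : (v : T) • X = (v : T) • Y) : X = Y := by
  have key : ∀ A B : Set T, (v : T) • A ⊆ (v : T) • B → A ⊆ B := by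
    intro A B hAB x hx
    obtain ⟨y, hy, hxy⟩ := mem_smul_set'.1 (hAB (mem_smul_set'.2 ⟨x, hx, rfl⟩))
    have : y = x := by
      have h2 : ((v⁻¹ : Tˣ) : T) * ((v : T) * y) = ((v⁻¹ : Tˣ) : T) * ((v : T) * x) := by
        rw [hxy]
      rwa [← mul_assoc, ← mul_assoc, Units.inv_mul, one_mul, one_mul] at h2
    exact this ▸ hy
  exact le_antisymm (key _ _ h.le) (key _ _ h.ge)

lemma sInter_eq (I : Set T) :
    ⋂₀ {J : Set T | ∃ z ∈ nonZeroDivisors T, J = z • ringSet R T ∧ I ⊆ J} =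
      invSet R T ((invSet R T I) ∩ regSet T) := by
  ext b
  simp only [Set.mem_sInter, Set.mem_setOf_eq]
  constructor
  · intro hb w hw
    obtain ⟨hwI, hwreg⟩ := hw
    obtain ⟨v, rfl⟩ := isUnit_of_reg (R := R) hwreg
    have hz : ((v⁻¹ : Tˣ) : T) ∈ nonZeroDivisors T := (v⁻¹ : Tˣ).isUnit.mem_nonZeroDivisors
    have hIz : I ⊆ ((v⁻¹ : Tˣ) : T) • ringSet R T := by
      intro x hx
      refine mem_smul_set'.2 ⟨(v : T) * x, hwI x hx, ?_⟩
      rw [← mul_assoc, Units.inv_mul, one_mul]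
    have := hb _ ⟨_, hz, rfl, hIz⟩
    obtain ⟨y, hy, rfl⟩ := mem_smul_set'.1 this
    rwa [show ((v⁻¹ : Tˣ) : T) * y * (v : T) = y by
      rw [mul_comm _ (v : T), ← mul_assoc, Units.mul_inv, one_mul]]
  · rintro hb J ⟨z, hz, rfl, hIz⟩
    obtain ⟨v, rfl⟩ := isUnit_of_reg (R := R) hz
    have hw : ((v⁻¹ : Tˣ) : T) ∈ invSet R T I := by
      intro x hx
      obtain ⟨y, hy, rfl⟩ := mem_smul_set'.1 (hIz hx)
      rwa [← mul_assoc, Units.inv_mul, one_mul]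
    have := hb _ ⟨hw, (v⁻¹ : Tˣ).isUnit.mem_nonZeroDivisors⟩
    refine mem_smul_set'.2 ⟨_, this, ?_⟩
    rw [mul_comm b, ← mul_assoc, Units.mul_inv, one_mul]
end smul

theorem stmt10 (R T : Type*) [CommRing R] [CommRing T] [Algebra R T] [IsFractionRing R T] :
    ((∀ I : Set T, I ⊆ ringSet R T → (I ∩ regSet T).Nonempty → vSet R T I = I →
        I = vSet R T (I ∩ regSet T)) ↔
      (∀ I : Set T, (I ∩ regSet T).Nonempty → isFrac R T I → vSet R T I = I →
        I = vSet R T (I ∩ regSet T))) ∧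
    ((∀ I : Set T, (I ∩ regSet T).Nonempty → isFrac R T I → vSet R T I = I →
        I = vSet R T (I ∩ regSet T)) ↔
      (∀ I : Set T, (I ∩ regSet T).Nonempty → isFrac R T I → vSet R T I = I →
        I = ⋂₀ {J : Set T | ∃ z ∈ nonZeroDivisors T, J = z • ringSet R T ∧ I ⊆ J})) := by
  constructor
  · constructor
    · -- (a) → (b): scale by the unit image of the denominator
      intro ha I hne hfrac hdiv
      obtain ⟨c, hc, hcI⟩ := hfrac
      obtain ⟨v, hv⟩ := isUnit_of_reg (R := R) (map_mem_reg (T := T) hc)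
      have hsub : (v : T) • I ⊆ ringSet R T := by
        rintro t ht
        obtain ⟨y, hy, rfl⟩ := mem_smul_set'.1 ht
        rw [hv]; exact hcI y hy
      have hne' : (((v : T) • I) ∩ regSet T).Nonempty := by
        rw [smul_inter_reg]
        obtain ⟨x, hx⟩ := hne
        exact ⟨(v : T) * x, mem_smul_set'.2 ⟨x, hx, rfl⟩⟩
      have hdiv' : vSet R T ((v : T) • I) = (v : T) • I := by
        rw [vSet_smul, hdiv]
      have h := ha _ hsub hne' hdiv'
      rw [smul_inter_reg, vSet_smul] at h
      exact smul_cancel h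
    · -- (b) → (a): ideals are fractional via c = 1
      intro hb I hsub hne hdiv
      exact hb I hne ⟨1, one_mem _, fun x hx => by simpa using hsub hx⟩ hdiv
  · constructor
    · -- (b) → (c): apply (b) to J = I⁻¹
      intro hb I hne hfrac hdiv
      set J := invSet R T I with hJ
      have hJne : (J ∩ regSet T).Nonempty := regMem_invSet hfrac
      have hJfrac : isFrac R T J := isFrac_invSet hne
      have hJdiv : vSet R T J = J := invSet_vSet I
      have hJ2 := hb J hJne hJfrac hJdiv
      rw [sInter_eq]
      calc I = vSet R T I := hdiv.symm
        _ = invSet R T J := rfl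
        _ = invSet R T (vSet R T (J ∩ regSet T)) := by rw [← hJ2]
        _ = invSet R T (J ∩ regSet T) := invSet_vSet _
    · -- (c) → (b): apply (c) to J = I⁻¹
      intro hc I hne hfrac hdiv
      set J := invSet R T I with hJ
      have hJne : (J ∩ regSet T).Nonempty := regMem_invSet hfrac
      have hJfrac : isFrac R T J := isFrac_invSet hne
      have hJdiv : vSet R T J = J := invSet_vSet I
      have hJ2 := hc J hJne hJfrac hJdiv
      rw [sInter_eq] at hJ2
      have h3 : invSet R T J = I := hdiv
      rw [h3] at hJ2
      calc I = invSet R T J := h3.symm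
        _ = invSet R T (invSet R T (I ∩ regSet T)) := by rw [hJ2]
        _ = vSet R T (I ∩ regSet T) := rfl
end

section
/- Let R be a commutative ring with total quotient ring T and let I be a regular fractional divisorial ideal of R. Then I is v-invertible (i.e., (I·I^{-1})_v = R) if and only if (I :_T I) = R. -/
open scoped Pointwise

lemma ringSet_mul {R T : Type*} [CommRing R] [CommRing T] [Algebra R T]
    {a b : T} (ha : a ∈ ringSet R T) (hb : b ∈ ringSet R T) : a * b ∈ ringSet R T := by
  obtain ⟨r, rfl⟩ := ha; obtain ⟨s, rfl⟩ := hb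
  exact ⟨r * s, map_mul _ _ _⟩

lemma ringSet_one {R T : Type*} [CommRing R] [CommRing T] [Algebra R T] :
    (1 : T) ∈ ringSet R T := ⟨1, map_one _⟩

/-- If `t X ⊆ X` then `t ⬝ X_v ⊆ X_v`. -/
lemma vSet_stable {R T : Type*} [CommRing R] [CommRing T] [Algebra R T]
    {t : T} {X : Set T} (h : ∀ x ∈ X, t * x ∈ X) {a : T} (ha : a ∈ vSet R T X) :
    t * a ∈ vSet R T X := by
  intro b hb
  have hb' : t * b ∈ invSet R T X := by
    intro x hx
    have := hb (t * x) (h x hx)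
    rwa [show t * b * x = b * (t * x) by ring]
  have := ha (t * b) hb'
  rwa [show t * a * b = a * (t * b) by ring]

theorem stmt17 (R T : Type*) [CommRing R] [CommRing T] [Algebra R T] [IsFractionRing R T]
    (I : Set T) (hreg : (I ∩ regSet T).Nonempty) (hfrac : isFrac R T I)
    (hdiv : vSet R T I = I) :
    vSet R T (I * invSet R T I) = ringSet R T ↔ colonSet T I I = ringSet R T := by
  constructor
  · intro hv
    ext t
    constructor
    · intro ht
      -- t * (I * I⁻¹) ⊆ I * I⁻¹
      have hstab : ∀ z ∈ I * invSet R T I, t * z ∈ I * invSet R T I := by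
        rintro z hz
        obtain ⟨x, hx, a, ha, rfl⟩ := hz
        exact ⟨t * x, ht x hx, a, ha, by ring⟩
      have h1 : (1 : T) ∈ vSet R T (I * invSet R T I) := by
        rw [hv]; exact ringSet_one
      have := vSet_stable (R := R) hstab h1
      rw [hv] at this
      simpa using this
    · rintro ⟨r, rfl⟩ x hx
      -- show (algebraMap r) * x ∈ I, using I = I_v
      rw [← hdiv]
      intro b hb
      have := hdiv ▸ hx
      have hxb : b * x ∈ ringSet R T := hb x hx
      rw [show algebraMap R T r * x * b = algebraMap R T r * (b * x) by ring]
      exact ringSet_mul ⟨r, rfl⟩ hxb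
  · intro hcol
    ext t
    constructor
    · intro ht
      have h1 : (1 : T) ∈ invSet R T (I * invSet R T I) := by
        rintro z ⟨x, hx, a, ha, rfl⟩
        show 1 * (x * a) ∈ ringSet R T
        rw [one_mul, mul_comm]
        exact ha x hx
      have := ht 1 h1
      simpa using this
    · intro hr b hb
      -- b ∈ invSet (I * I⁻¹)  ⟹  b ∈ colonSet I I = ringSet
      have hbI : b ∈ colonSet T I I := by
        intro x hx
        rw [← hdiv]
        intro a ha
        have := hb (x * a) ⟨x, hx, a, ha, rfl⟩
        rwa [show b * x * a = b * (x * a) by ring]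
      rw [hcol] at hbI
      exact ringSet_mul hr hbI
end
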